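/- Let Γ be a group and let μ be a Borel probability measure on Γ → Bool (product topology, Bool discrete) such that μ(S(Γ)) = 1, i.e. μ-almost every f is the indicator of a subgroup of Γ. Define τ_μ : Γ → ℝ by τ_μ(g) = μ {f : Γ → Bool | f g = true}. Then τ_μ(1) = 1 and τ_μ is positive definite: for every n, every g : Fin n → Γ and c : Fin n → ℂ, the complex number ∑ i, ∑ j, conj(c i) * (c j) * τ_μ((g i)⁻¹ * g j) has zero imaginary part and nonnegative real part. -/

import Mathlib

open MeasureTheory
open scoped ComplexConjugate

/-- `S(Γ)`: the set of indicator functions of subgroups of `Γ` inside `Γ → Bool`. -/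
def subgroupIndicators (Γ : Type*) [Group Γ] : Set (Γ → Bool) :=
  {f | ∃ K : Subgroup Γ, ∀ g : Γ, f g = true ↔ g ∈ K}

lemma evalSet_clopen {Γ : Type*} (x : Γ) : IsClopen {f : Γ → Bool | f x = true} := by
  have : {f : Γ → Bool | f x = true} = (fun f : Γ → Bool => f x) ⁻¹' {true} := by
    ext f; simp
  rw [this]
  exact (isClopen_discrete {true}).preimage (continuous_apply x)

lemma subgroupIndicators_closed {Γ : Type*} [Group Γ] :
    IsClosed (subgroupIndicators Γ) := by
  have heq : subgroupIndicators Γ =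
      {f : Γ → Bool | f 1 = true} ∩
      ((⋂ (g : Γ), ⋂ (h : Γ),
        (({f : Γ → Bool | f g = true} ∩ {f : Γ → Bool | f h = true})ᶜ ∪
          {f : Γ → Bool | f (g * h) = true})) ∩
       (⋂ (g : Γ), ({f : Γ → Bool | f g = true}ᶜ ∪ {f : Γ → Bool | f g⁻¹ = true}))) := by
    ext f
    simp only [subgroupIndicators, Set.mem_setOf_eq, Set.mem_inter_iff, Set.mem_iInter,
      Set.mem_union, Set.mem_compl_iff, Set.mem_setOf_eq]
    constructor
    · rintro ⟨K, hK⟩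
      refine ⟨(hK 1).2 K.one_mem, fun g h => ?_, fun g => ?_⟩
      · by_cases hg : f g = true ∧ f h = true
        · exact Or.inr ((hK _).2 (K.mul_mem ((hK g).1 hg.1) ((hK h).1 hg.2)))
        · exact Or.inl hg
      · by_cases hg : f g = true
        · exact Or.inr ((hK _).2 (K.inv_mem ((hK g).1 hg)))
        · exact Or.inl hg
    · rintro ⟨h1, hmul, hinv⟩
      refine ⟨{ carrier := {g : Γ | f g = true},
                one_mem' := h1,
                mul_mem' := fun {a b} ha hb => ?_,
                inv_mem' := fun {a} ha => ?_ }, fun g => Iff.rfl⟩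
      · rcases hmul a b with h | h
        · exact absurd ⟨ha, hb⟩ h
        · exact h
      · rcases hinv a with h | h
        · exact absurd ha h
        · exact h
  rw [heq]
  refine IsClosed.inter (evalSet_clopen 1).isClosed (IsClosed.inter ?_ ?_)
  · refine isClosed_iInter fun g => isClosed_iInter fun h => IsClosed.union ?_ ?_
    · exact ((evalSet_clopen g).inter (evalSet_clopen h)).compl.isClosed
    · exact (evalSet_clopen (g * h)).isClosed
  · refine isClosed_iInter fun g => IsClosed.union ?_ ?_
    · exact (evalSet_clopen g).compl.isClosed
    · exact (evalSet_clopen g⁻¹).isClosed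

/-- Pointwise positive-definiteness for a fixed subgroup indicator. -/
lemma pointwise_posdef {Γ : Type*} [Group Γ] (K : Subgroup Γ) (n : ℕ)
    (g : Fin n → Γ) (c : Fin n → ℂ) (f : Γ → Bool)
    (hf : ∀ x : Γ, f x = true ↔ x ∈ K) :
    ∃ r : ℝ, 0 ≤ r ∧
      (∑ i, ∑ j, conj (c i) * c j *
        (if f ((g i)⁻¹ * g j) = true then (1 : ℂ) else 0)) = (r : ℂ) := by
  classical
  set e : Fin n → Γ ⧸ K := fun i => QuotientGroup.mk (g i) with he
  set t : Finset (Γ ⧸ K) := Finset.univ.image e with ht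
  set d : Γ ⧸ K → ℂ := fun z => ∑ i ∈ Finset.univ.filter (fun i => e i = z), c i with hd
  refine ⟨∑ z ∈ t, Complex.normSq (d z),
    Finset.sum_nonneg fun z _ => Complex.normSq_nonneg _, ?_⟩
  have hIte : ∀ i j : Fin n,
      (if f ((g i)⁻¹ * g j) = true then (1 : ℂ) else 0) =
      (if e i = e j then 1 else 0) := by
    intro i j
    have : f ((g i)⁻¹ * g j) = true ↔ e i = e j := by
      rw [hf]
      exact (QuotientGroup.eq (s := K) (a := g i) (b := g j)).symm
    simp [this]
  calc (∑ i, ∑ j, conj (c i) * c j *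
        (if f ((g i)⁻¹ * g j) = true then (1 : ℂ) else 0))
      = ∑ i, conj (c i) * d (e i) := by
        refine Finset.sum_congr rfl fun i _ => ?_
        simp only [hd]
        rw [Finset.sum_filter, Finset.mul_sum]
        refine Finset.sum_congr rfl fun j _ => ?_
        rw [hIte]
        by_cases hij : e i = e j <;> simp [hij, eq_comm]
    _ = ∑ z ∈ t, ∑ i ∈ Finset.univ.filter (fun i => e i = z),
          conj (c i) * d (e i) :=
        (Finset.sum_fiberwise_of_maps_to
          (fun i _ => Finset.mem_image_of_mem e (Finset.mem_univ i)) _).symm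
    _ = ∑ z ∈ t, (Complex.normSq (d z) : ℂ) := by
        refine Finset.sum_congr rfl fun z _ => ?_
        have : ∑ i ∈ Finset.univ.filter (fun i => e i = z),
            conj (c i) * d (e i) = conj (d z) * d z := by
          rw [hd, map_sum, Finset.sum_mul]
          refine Finset.sum_congr rfl fun i hi => ?_
          rw [(Finset.mem_filter.1 hi).2]
        rw [this, mul_comm, Complex.mul_conj]
    _ = ((∑ z ∈ t, Complex.normSq (d z) : ℝ) : ℂ) := by push_cast; ring

/-- If `μ` is a Borel probability measure on `Γ → Bool` concentrated on indicator functions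
of subgroups (a random subgroup), then `τ_μ(g) := μ {f | f g}` satisfies `τ_μ(1) = 1` and is
positive definite. -/
theorem randomSubgroup_trace_posDef {Γ : Type*} [Group Γ]
    [MeasurableSpace (Γ → Bool)] [BorelSpace (Γ → Bool)]
    (μ : Measure (Γ → Bool)) [IsProbabilityMeasure μ]
    (hμ : μ (subgroupIndicators Γ) = 1)
    (τ : Γ → ℝ) (hτ : ∀ g : Γ, τ g = (μ {f : Γ → Bool | f g = true}).toReal) :
    τ 1 = 1 ∧
    ∀ (n : ℕ) (g : Fin n → Γ) (c : Fin n → ℂ),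
      (∑ i, ∑ j, conj (c i) * c j * ((τ ((g i)⁻¹ * g j) : ℝ) : ℂ)).im = 0 ∧
      0 ≤ (∑ i, ∑ j, conj (c i) * c j * ((τ ((g i)⁻¹ * g j) : ℝ) : ℂ)).re := by
  classical
  have hAm : ∀ x : Γ, MeasurableSet {f : Γ → Bool | f x = true} := fun x =>
    (evalSet_clopen x).isClosed.measurableSet
  have hSmeas : MeasurableSet (subgroupIndicators Γ) :=
    subgroupIndicators_closed.measurableSet
  have hae : ∀ᵐ f ∂μ, f ∈ subgroupIndicators Γ := by
    rw [Filter.eventually_iff, mem_ae_iff]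
    exact (prob_compl_eq_zero_iff hSmeas).2 hμ
  constructor
  · -- τ 1 = 1
    rw [hτ]
    have hsub : subgroupIndicators Γ ⊆ {f : Γ → Bool | f 1 = true} := by
      rintro f ⟨K, hK⟩
      exact (hK 1).2 K.one_mem
    have h1 : μ {f : Γ → Bool | f 1 = true} = 1 :=
      le_antisymm prob_le_one (hμ ▸ measure_mono hsub)
    rw [h1]; simp
  · intro n g c
    set F : (Γ → Bool) → ℂ := fun f => ∑ i, ∑ j, conj (c i) * c j *
      (if f ((g i)⁻¹ * g j) = true then (1 : ℂ) else 0) with hF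
    have hterm_eq : ∀ (x : Γ) (k : ℂ),
        (fun f : Γ → Bool => k * (if f x = true then (1 : ℂ) else 0)) =
        Set.indicator {f : Γ → Bool | f x = true} (fun _ => k) := by
      intro x k
      ext f
      rw [Set.indicator_apply]
      by_cases hx : f x = true <;> simp [hx]
    have hterm_int : ∀ (x : Γ) (k : ℂ),
        Integrable (fun f : Γ → Bool => k * (if f x = true then (1 : ℂ) else 0)) μ := by
      intro x k
      rw [hterm_eq]
      exact (integrable_const k).indicator (hAm x)
    have hterm_intgl : ∀ (x : Γ) (k : ℂ),
        ∫ f, k * (if f x = true then (1 : ℂ) else 0) ∂μ =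
        k * ((μ {f : Γ → Bool | f x = true}).toReal : ℂ) := by
      intro x k
      rw [hterm_eq, integral_indicator_const k (hAm x), Complex.real_smul, mul_comm]
      rfl
    have hF_int : Integrable F μ := by
      rw [hF]
      refine integrable_finset_sum _ fun i _ => integrable_finset_sum _ fun j _ => ?_
      exact hterm_int _ _
    have hIntF : ∫ f, F f ∂μ =
        ∑ i, ∑ j, conj (c i) * c j * ((τ ((g i)⁻¹ * g j) : ℝ) : ℂ) := by
      rw [hF, integral_finset_sum _ (fun i _ =>
        integrable_finset_sum _ fun j _ => hterm_int _ _)]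
      refine Finset.sum_congr rfl fun i _ => ?_
      rw [integral_finset_sum _ (fun j _ => hterm_int _ _)]
      refine Finset.sum_congr rfl fun j _ => ?_
      rw [hterm_intgl, hτ]
    have haept : ∀ᵐ f ∂μ, (F f).im = 0 ∧ 0 ≤ (F f).re := by
      filter_upwards [hae] with f hf
      obtain ⟨K, hK⟩ := hf
      obtain ⟨r, hr, hFr⟩ := pointwise_posdef K n g c f hK
      rw [hF]
      simp only
      rw [hFr]
      exact ⟨Complex.ofReal_im r, by rw [Complex.ofReal_re]; exact hr⟩
    rw [← hIntF]
    constructor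
    · have him : ∫ f, (F f).im ∂μ = (∫ f, F f ∂μ).im := integral_im hF_int
      rw [← him]
      rw [integral_eq_zero_of_ae]
      filter_upwards [haept] with f hf
      exact hf.1
    · have hre : ∫ f, (F f).re ∂μ = (∫ f, F f ∂μ).re := integral_re hF_int
      rw [← hre]
      refine integral_nonneg_of_ae ?_
      filter_upwards [haept] with f hf
      exact hf.2
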